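/- For Ω ⊆ ℝ³ non-empty open and Φ ∈ D(Grad), T ∈ D(Div): ⟨Grad Φ | T⟩_{L²} + ⟨Φ | Div T⟩_{L²} = ⟨Grad(π_G Φ) | π_D T⟩_{L²} + ⟨π_G Φ | Div(π_D T)⟩_{L²}, where π_G = ι_Grad ι_Grad* is the orthogonal projector of D(Grad) onto N(1 - Div Grad) and π_D = ι_Div ι_Div* is the orthogonal projector of D(Div) onto N(1 - Grad Div). -/

import Mathlib

open LinearPMap

/-- For `Φ ∈ D(Grad)` and `T ∈ D(Div)`, the integration-by-parts boundary
term `⟨Grad Φ | T⟩ + ⟨Φ | Div T⟩` depends only on the boundary-data projections: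
if `πG` is the orthogonal projector of `D(Grad)` (graph inner product) onto
`N(1 - Div Grad)` (so `Φ - πG Φ ∈ D(Grad₀)`) and `πD` the orthogonal projector of
`D(Div)` onto `N(1 - Grad Div)` (so `T - πD T ∈ D(Div₀)`), and
`⟨Grad φ | T⟩ + ⟨φ | Div T⟩ = 0` whenever `φ ∈ D(Grad₀)` or `T ∈ D(Div₀)`, then
`⟨Grad Φ | T⟩ + ⟨Φ | Div T⟩ = ⟨Grad (πG Φ) | πD T⟩ + ⟨πG Φ | Div (πD T)⟩`. -/
theorem stmt14 {H K : Type*}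
    [NormedAddCommGroup H] [InnerProductSpace ℂ H] [CompleteSpace H]
    [NormedAddCommGroup K] [InnerProductSpace ℂ K] [CompleteSpace K]
    (Grad : H →ₗ.[ℂ] K) (Div : K →ₗ.[ℂ] H)
    (DG₀ : Submodule ℂ H) (hDG₀ : DG₀ ≤ Grad.domain)   -- D(Grad₀)
    (DD₀ : Submodule ℂ K) (hDD₀ : DD₀ ≤ Div.domain)    -- D(Div₀)
    (hibp : ∀ (φ : Grad.domain) (T : Div.domain), ((φ : H) ∈ DG₀ ∨ (T : K) ∈ DD₀) →
      (inner ℂ (Grad φ) ((T : K)) : ℂ) + inner ℂ ((φ : H)) (Div T) = 0)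
    (πG : Grad.domain →ₗ[ℂ] Grad.domain)
    (hπG : ∀ Φ : Grad.domain, ((Φ - πG Φ : Grad.domain) : H) ∈ DG₀)
    (πD : Div.domain →ₗ[ℂ] Div.domain)
    (hπD : ∀ T : Div.domain, ((T - πD T : Div.domain) : K) ∈ DD₀)
    (Φ : Grad.domain) (T : Div.domain) :
    (inner ℂ (Grad Φ) ((T : K)) : ℂ) + inner ℂ ((Φ : H)) (Div T)
      = (inner ℂ (Grad (πG Φ)) (((πD T : Div.domain) : K)) : ℂ)
        + inner ℂ (((πG Φ : Grad.domain) : H)) (Div (πD T)) := by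
  have h1 := hibp (Φ - πG Φ) T (Or.inl (hπG Φ))
  have h2 := hibp (πG Φ) (T - πD T) (Or.inr (hπD T))
  simp only [LinearPMap.map_sub, Submodule.coe_sub, inner_sub_left, inner_sub_right] at h1 h2
  linear_combination h1 + h2
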